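/- Let p be a real number with 0 < p < 1 and set q = 1 − p. Then for every integer s ≥ 1, q·(p/q)^s + p·(q/p)^s ≥ 1, with equality when s = 1. -/

import Mathlib

/-- Superharmonicity estimate behind the optimality of timid play:
for `0 < p < 1`, `q = 1 - p`, and every integer stake `s ≥ 1`,
`q·(p/q)^s + p·(q/p)^s ≥ 1`, with equality when `s = 1`. -/
theorem timid_superharmonic_inequality
    (p q : ℝ) (hp0 : 0 < p) (hp1 : p < 1) (hq : q = 1 - p) :
    (∀ s : ℕ, 1 ≤ s → 1 ≤ q * (p / q) ^ s + p * (q / p) ^ s) ∧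
    q * (p / q) ^ 1 + p * (q / p) ^ 1 = 1 := by
  have hq0 : 0 < q := by rw [hq]; linarith
  have base : q * (p / q) ^ 1 + p * (q / p) ^ 1 = 1 := by
    field_simp
    nlinarith
  refine ⟨fun s hs => ?_, base⟩
  induction s with
  | zero => omega
  | succ n ih =>
    rcases Nat.lt_or_ge n 1 with h | hn
    · interval_cases n
      rw [base]
    · have ihn := ih hn
      have key : q * (p / q) ^ (n + 1) + p * (q / p) ^ (n + 1) =
          q * (p / q) ^ n + p * (q / p) ^ n +
            (p - q) * ((p / q) ^ n - (q / p) ^ n) := by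
        have h1 : q * (p / q) ^ (n + 1) = p * (p / q) ^ n := by
          rw [pow_succ]; field_simp
        have h2 : p * (q / p) ^ (n + 1) = q * (q / p) ^ n := by
          rw [pow_succ]; field_simp
        rw [h1, h2]; ring
      have sign : 0 ≤ (p - q) * ((p / q) ^ n - (q / p) ^ n) := by
        rcases le_total q p with h | h
        · have hle : (q / p) ^ n ≤ (p / q) ^ n := by
            apply pow_le_pow_left₀ (by positivity)
            rw [div_le_div_iff₀ hp0 hq0]; nlinarith
          nlinarith
        · have hle : (p / q) ^ n ≤ (q / p) ^ n := by
            apply pow_le_pow_left₀ (by positivity)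
            rw [div_le_div_iff₀ hq0 hp0]; nlinarith
          nlinarith
      linarith [key]
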